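/- Orthogonality of the primitive decomposition: under the stated hypotheses, for every integer a ≥ 0 the bilinear form β on H^{−a} defined by β(x, y) := ψ(x, N^a y) is nondegenerate, and for all non-negative integers s ≠ s′ and all p ∈ P^{−a−2s}, q ∈ P^{−a−2s′} one has β(N^s p, N^{s′} q) = 0. -/
import Mathlib


namespace LefschetzDecomposition

variable (H : ℤ → Type) [∀ a, AddCommGroup (H a)] [∀ a, Module ℚ (H a)]

/-- Transport along an equality of indices. -/
def hcast {a b : ℤ} (h : a = b) : H a ≃ₗ[ℚ] H b := by
  subst h; exact LinearEquiv.refl ℚ (H a)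

lemma hcast_rfl {a : ℤ} (h : a = a) (x : H a) : hcast H h x = x := rfl

lemma hcast_trans {a b c : ℤ} (h1 : a = b) (h2 : b = c) (x : H a) :
    hcast H h2 (hcast H h1 x) = hcast H (h1.trans h2) x := by
  subst h1; subst h2; rfl

variable (N : ∀ a : ℤ, H a →ₗ[ℚ] H (a + 2))

/-- The `n`-fold composite `N^n : H^a → H^{a + 2n}`. -/
noncomputable def Npow : (n : ℕ) → (a : ℤ) → (H a →ₗ[ℚ] H (a + 2 * n))
  | 0, a => (hcast H (by push_cast; ring)).toLinearMap
  | n + 1, a =>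
      (hcast H (show a + 2 + 2 * (n : ℕ) = a + 2 * ((n : ℕ) + 1) by push_cast; ring)).toLinearMap
        ∘ₗ Npow n (a + 2) ∘ₗ N a

lemma N_hcast {a b : ℤ} (h : a = b) (x : H a) :
    N b (hcast H h x) = hcast H (by rw [h]) (N a x) := by
  subst h; rfl

lemma Npow_zero_apply (a : ℤ) (x : H a) :
    Npow H N 0 a x = hcast H (by push_cast; ring) x := rfl

lemma Npow_succ_apply (n : ℕ) (a : ℤ) (x : H a) :
    Npow H N (n + 1) a x
      = hcast H (by push_cast; ring) (Npow H N n (a + 2) (N a x)) := rfl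

lemma Npow_hcast (n : ℕ) {a b : ℤ} (h : a = b) (x : H a) :
    Npow H N n b (hcast H h x) = hcast H (by rw [h]) (Npow H N n a x) := by
  subst h; rfl

lemma Npow_congr {n n' : ℕ} (h : n = n') (a : ℤ) (x : H a) :
    Npow H N n' a x = hcast H (by rw [h]) (Npow H N n a x) := by
  subst h; rfl

lemma Npow_succ_right (n : ℕ) (a : ℤ) (x : H a) :
    Npow H N (n + 1) a x
      = hcast H (by push_cast; ring) (N (a + 2 * n) (Npow H N n a x)) := by
  induction n generalizing a x with
  | zero =>
      rw [Npow_succ_apply, Npow_zero_apply, Npow_zero_apply, N_hcast, hcast_trans, hcast_trans]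
  | succ n ih =>
      rw [Npow_succ_apply, ih (a + 2) (N a x), hcast_trans,
        Npow_succ_apply, N_hcast, hcast_trans]

lemma Npow_add (m n : ℕ) (a : ℤ) (x : H a) :
    Npow H N n (a + 2 * m) (Npow H N m a x)
      = hcast H (by push_cast; ring) (Npow H N (m + n) a x) := by
  induction n with
  | zero => rw [Npow_zero_apply]; rfl
  | succ n ih =>
      rw [Npow_congr H N (show (m + n) + 1 = m + (n + 1) from rfl) a x,
        Npow_succ_right, ih, N_hcast, hcast_trans,
        Npow_succ_right H N (m + n) a x, hcast_trans, hcast_trans]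

lemma Npow_eq_zero_of_le (k l : ℕ) (hkl : k ≤ l) (m : ℤ) (x : H m)
    (hx : Npow H N k m x = 0) : Npow H N l m x = 0 := by
  obtain ⟨n, rfl⟩ := Nat.exists_eq_add_of_le hkl
  have h := Npow_add H N k n m x
  rw [hx, map_zero] at h
  exact (LinearEquiv.map_eq_zero_iff _).mp h.symm

/-- The `a`-fold composite `N^a : H^{-a} → H^a`. -/
noncomputable def Niter (a : ℕ) : H (-(a : ℤ)) →ₗ[ℚ] H (a : ℤ) :=
  (hcast H (show -(a : ℤ) + 2 * (a : ℕ) = (a : ℤ) by push_cast; ring)).toLinearMap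
    ∘ₗ Npow H N a (-(a : ℤ))

/-- The primitive part in (nonpositive) degree `m`: for `m = -a` with `a ≥ 0` this is
`P^{-a} = ker (N^{a+1} : H^{-a} → H^{a+2})`. -/
noncomputable def Pprim (m : ℤ) : Submodule ℚ (H m) :=
  LinearMap.ker (Npow H N (m.natAbs + 1) m)

/-- The map `N^s : H^{-a-2s} → H^{-a}`. -/
noncomputable def Nshift (a s : ℕ) : H (-(a : ℤ) - 2 * s) →ₗ[ℚ] H (-(a : ℤ)) :=
  (hcast H (show -(a : ℤ) - 2 * s + 2 * (s : ℕ) = -(a : ℤ) by push_cast; ring)).toLinearMap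
    ∘ₗ Npow H N s (-(a : ℤ) - 2 * s)

lemma Nshift_apply (a s : ℕ) (x : H (-(a : ℤ) - 2 * s)) :
    Nshift H N a s x
      = hcast H (show -(a : ℤ) - 2 * s + 2 * (s : ℕ) = -(a : ℤ) by push_cast; ring)
          (Npow H N s (-(a : ℤ) - 2 * s) x) := rfl

variable (ψ : ∀ u v : ℤ, H u →ₗ[ℚ] H v →ₗ[ℚ] ℚ)

lemma psi_hcast_left {u u' : ℤ} (h : u = u') (v : ℤ) (x : H u) (y : H v) :
    ψ u' v (hcast H h x) y = ψ u v x y := by subst h; rfl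

lemma psi_hcast_right (u : ℤ) {v v' : ℤ} (h : v = v') (x : H u) (y : H v) :
    ψ u v' x (hcast H h y) = ψ u v x y := by subst h; rfl

lemma transfer
    (hψN : ∀ u v : ℤ, u + v + 2 = 0 → ∀ (x : H u) (y : H v),
      ψ (u + 2) v (N u x) y + ψ u (v + 2) x (N v y) = 0)
    (k : ℕ) : ∀ (u v : ℤ), u + v + 2 * k = 0 → ∀ (x : H u) (y : H v),
    ψ (u + 2 * k) v (Npow H N k u x) y
      = (-1 : ℚ) ^ k * ψ u (v + 2 * k) x (Npow H N k v y) := by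
  induction k with
  | zero =>
      intro u v _ x y
      rw [Npow_zero_apply, Npow_zero_apply, psi_hcast_left, psi_hcast_right, pow_zero, one_mul]
  | succ k ih =>
      intro u v hc x y
      rw [Npow_succ_apply, psi_hcast_left,
        ih (u + 2) v (by push_cast at hc ⊢; linarith) (N u x) y]
      have h2 : ψ (u + 2) (v + 2 * k) (N u x) (Npow H N k v y)
          = - ψ u (v + 2 * k + 2) x (N (v + 2 * k) (Npow H N k v y)) := by
        have := hψN u (v + 2 * k) (by push_cast at hc ⊢; linarith) x (Npow H N k v y)
        linarith
      rw [h2, Npow_succ_right H N k v y, psi_hcast_right]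
      ring

end LefschetzDecomposition

open LefschetzDecomposition in
/-- **Orthogonality of the primitive decomposition.**  Let `(H^a)` be a bounded family of
finite-dimensional `ℚ`-vector spaces with maps `N : H^a → H^{a+2}` satisfying hard Lefschetz, and
nondegenerate pairings `ψ : H^{-a} × H^a → ℚ` (presented as a family `ψ u v`, meaningful when
`u + v = 0`) satisfying `ψ(Nx, y) + ψ(x, Ny) = 0`.  Then for every `a ≥ 0` the bilinear form
`β(x, y) := ψ(x, N^a y)` on `H^{-a}` is nondegenerate, and for `s ≠ s'` the pieces
`N^s P^{-a-2s}` and `N^{s'} P^{-a-2s'}` are `β`-orthogonal. -/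
theorem primitive_decomposition_orthogonality
    (H : ℤ → Type) [∀ a, AddCommGroup (H a)] [∀ a, Module ℚ (H a)]
    [∀ a, FiniteDimensional ℚ (H a)]
    (hbdd : ∃ n : ℕ, ∀ a : ℤ, (n : ℤ) ≤ |a| → ∀ x : H a, x = 0)
    (N : ∀ a : ℤ, H a →ₗ[ℚ] H (a + 2))
    (hHL : ∀ a : ℕ, Function.Bijective (Niter H N a))
    (ψ : ∀ u v : ℤ, H u →ₗ[ℚ] H v →ₗ[ℚ] ℚ)
    (hψl : ∀ u v : ℤ, u + v = 0 → ∀ x : H u, (∀ y : H v, ψ u v x y = 0) → x = 0)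
    (hψr : ∀ u v : ℤ, u + v = 0 → ∀ y : H v, (∀ x : H u, ψ u v x y = 0) → y = 0)
    (hψN : ∀ u v : ℤ, u + v + 2 = 0 → ∀ (x : H u) (y : H v),
      ψ (u + 2) v (N u x) y + ψ u (v + 2) x (N v y) = 0) :
    ∀ a : ℕ,
      (∀ x : H (-(a : ℤ)),
        (∀ y : H (-(a : ℤ)),
          ψ (-(a : ℤ)) (-(a : ℤ) + 2 * (a : ℕ)) x (Npow H N a (-(a : ℤ)) y) = 0) → x = 0) ∧
      (∀ y : H (-(a : ℤ)),
        (∀ x : H (-(a : ℤ)),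
          ψ (-(a : ℤ)) (-(a : ℤ) + 2 * (a : ℕ)) x (Npow H N a (-(a : ℤ)) y) = 0) → y = 0) ∧
      (∀ s s' : ℕ, s ≠ s' →
        ∀ p ∈ Pprim H N (-(a : ℤ) - 2 * s), ∀ q ∈ Pprim H N (-(a : ℤ) - 2 * s'),
          ψ (-(a : ℤ)) (-(a : ℤ) + 2 * (a : ℕ)) (Nshift H N a s p)
            (Npow H N a (-(a : ℤ)) (Nshift H N a s' q)) = 0) := by
  intro a
  have hiter : ∀ x, Niter H N a x
      = hcast H (show -(a : ℤ) + 2 * (a : ℕ) = (a : ℤ) by push_cast; ring)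
          (Npow H N a (-(a : ℤ)) x) := fun _ => rfl
  have hbij : Function.Bijective (Npow H N a (-(a : ℤ))) := by
    constructor
    · intro x y hxy
      exact (hHL a).1 (by rw [hiter, hiter, hxy])
    · intro z
      obtain ⟨x, hx⟩ := (hHL a).2
        ((hcast H (show -(a : ℤ) + 2 * (a : ℕ) = (a : ℤ) by push_cast; ring)) z)
      refine ⟨x, (hcast H (show -(a : ℤ) + 2 * (a : ℕ) = (a : ℤ)
        by push_cast; ring)).injective ?_⟩
      rw [← hiter]; exact hx
  refine ⟨?_, ?_, ?_⟩
  · intro x hx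
    refine hψl (-(a : ℤ)) (-(a : ℤ) + 2 * (a : ℕ)) (by push_cast; ring) x ?_
    intro z
    obtain ⟨y, rfl⟩ := hbij.2 z
    exact hx y
  · intro y hy
    have h0 : Npow H N a (-(a : ℤ)) y = 0 :=
      hψr (-(a : ℤ)) (-(a : ℤ) + 2 * (a : ℕ)) (by push_cast; ring) _ hy
    exact hbij.1 (by rw [h0, map_zero])
  · intro s s' hss p hp q hq
    rw [Pprim, LinearMap.mem_ker] at hp hq
    rw [show ((-(a : ℤ) - 2 * (s : ℕ)).natAbs) = a + 2 * s by omega] at hp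
    rw [show ((-(a : ℤ) - 2 * (s' : ℕ)).natAbs) = a + 2 * s' by omega] at hq
    rw [Nshift_apply, Nshift_apply, Npow_hcast, Npow_add, hcast_trans,
      psi_hcast_left, psi_hcast_right]
    rcases Nat.lt_or_ge s' s with hlt | hge
    · rw [transfer H N ψ hψN s (-(a : ℤ) - 2 * s)
        (-(a : ℤ) - 2 * s' + 2 * ((s' + a : ℕ) : ℤ)) (by push_cast; ring) p
        (Npow H N (s' + a) (-(a : ℤ) - 2 * s') q),
        Npow_add]
      have hz : Npow H N ((s' + a) + s) (-(a : ℤ) - 2 * s') q = 0 :=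
        Npow_eq_zero_of_le H N (a + 2 * s' + 1) _ (by omega) _ q hq
      rw [hz, map_zero, map_zero, mul_zero]
    · have ht := transfer H N ψ hψN (s' + a) (-(a : ℤ) - 2 * s + 2 * ((s : ℕ) : ℤ))
        (-(a : ℤ) - 2 * s') (by push_cast; ring) (Npow H N s (-(a : ℤ) - 2 * s) p) q
      rw [Npow_add] at ht
      have hz : Npow H N (s + (s' + a)) (-(a : ℤ) - 2 * s) p = 0 :=
        Npow_eq_zero_of_le H N (a + 2 * s + 1) _ (by omega) _ p hp
      rw [hz, map_zero, map_zero, LinearMap.zero_apply] at ht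
      have h4 : ((-1 : ℚ) ^ (s' + a)) ≠ 0 := pow_ne_zero _ (by norm_num)
      rcases mul_eq_zero.mp ht.symm with h | h
      · exact absurd h h4
      · exact h
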